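/- Let G be a (possibly infinite) graph, let s, t ∈ V(G) be distinct, and let 𝒫 be a system of pairwise edge-disjoint st-paths. Then either there exists an st-cut C orthogonal to 𝒫, or there is another system 𝒬 of pairwise edge-disjoint st-paths such that δ_𝒬(s) properly contains δ_𝒫(s) with exactly one new edge, and δ_𝒬(t) properly contains δ_𝒫(t) with exactly one new edge. -/

import Mathlib

/-!
Common definitions: multigraphs (parallel edges allowed, no loops), walks,
paths, cuts, waves and related notions used in the statements below.
-/

universe u v

/-- A multigraph with vertex type `V` and edge type `E`: every edge is assigned
an unordered pair of *distinct* end-vertices (parallel edges allowed, no loops). -/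
structure Multigraph (V : Type u) (E : Type v) : Type (max u v) where
  inc : E → Sym2 V
  not_isDiag : ∀ e, ¬ (inc e).IsDiag

namespace Multigraph

variable {V : Type u} {E : Type v}

/-- Walks in a multigraph, recorded together with the edges they traverse. -/
inductive Walk (G : Multigraph V E) : V → V → Type (max u v)
  | nil (v : V) : Walk G v v
  | cons {u v w : V} (e : E) (he : G.inc e = s(u, v)) (p : Walk G v w) : Walk G u w

namespace Walk

variable {G : Multigraph V E}

/-- The list of vertices visited by a walk. -/
def support : ∀ {u w : V}, G.Walk u w → List V
  | _, _, .nil v => [v]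
  | u, _, .cons _ _ p => u :: p.support

/-- The list of edges traversed by a walk. -/
def edges : ∀ {u w : V}, G.Walk u w → List E
  | _, _, .nil _ => []
  | _, _, .cons e _ p => e :: p.edges

end Walk

/-- `δ_G(v)`: the set of edges incident with the vertex `v`. -/
def inci (G : Multigraph V E) (v : V) : Set E := {e | v ∈ G.inc e}

/-- `δ_G(X)`: the set of edges with exactly one end-vertex in `X`. -/
def cut (G : Multigraph V E) (X : Set V) : Set E :=
  {e | ∃ x y, G.inc e = s(x, y) ∧ x ∈ X ∧ y ∉ X}

/-- Connectedness of a multigraph. -/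
def Connected (G : Multigraph V E) : Prop := ∀ u v : V, Nonempty (G.Walk u v)

/-- A `T`-path: a path connecting two distinct vertices of `T`
with no internal vertex in `T`. -/
structure TPath (G : Multigraph V E) (T : Set V) : Type (max u v) where
  first : V
  last : V
  walk : G.Walk first last
  first_mem : first ∈ T
  last_mem : last ∈ T
  ne : first ≠ last
  support_nodup : walk.support.Nodup
  internal : ∀ x ∈ walk.support, x ∈ T → x = first ∨ x = last

/-- A system of pairwise edge-disjoint `T`-paths. -/
def TPathDisjoint (G : Multigraph V E) {T : Set V} (P : Set (G.TPath T)) : Prop :=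
  ∀ p ∈ P, ∀ q ∈ P, p ≠ q → ∀ e, e ∈ p.walk.edges → e ∉ q.walk.edges

/-- An `st`-path: a path from `s` to `t` (no internal vertex is `s` or `t`,
which is automatic as the vertices of a path are distinct). -/
structure STPath (G : Multigraph V E) (s t : V) : Type (max u v) where
  walk : G.Walk s t
  support_nodup : walk.support.Nodup

/-- A system of pairwise edge-disjoint `st`-paths. -/
def STPathDisjoint (G : Multigraph V E) {s t : V} (P : Set (G.STPath s t)) : Prop :=
  ∀ p ∈ P, ∀ q ∈ P, p ≠ q → ∀ e, e ∈ p.walk.edges → e ∉ q.walk.edges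

/-- A nontrivial path starting at `s`. -/
structure SPath (G : Multigraph V E) (s : V) : Type (max u v) where
  last : V
  walk : G.Walk s last
  support_nodup : walk.support.Nodup
  edges_ne_nil : walk.edges ≠ []

/-- A system of pairwise edge-disjoint paths starting at `s`. -/
def SPathDisjoint (G : Multigraph V E) {s : V} (W : Set (G.SPath s)) : Prop :=
  ∀ p ∈ W, ∀ q ∈ W, p ≠ q → ∀ e, e ∈ p.walk.edges → e ∉ q.walk.edges

/-- The set of last edges of a system of paths starting at `s`. -/
def lastEdges (G : Multigraph V E) {s : V} (W : Set (G.SPath s)) : Set E :=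
  {e | ∃ p ∈ W, p.walk.edges.getLast? = some e}

/-- `C` is a cut separating `A` from `B`. -/
def SepCut (G : Multigraph V E) (A B : Set V) (C : Set E) : Prop :=
  ∃ X : Set V, A ⊆ X ∧ (∀ b ∈ B, b ∉ X) ∧ C = G.cut X

/-- `C` is a `⊆`-minimal cut separating `A` from `B`. -/
def IsMinSepCut (G : Multigraph V E) (A B : Set V) (C : Set E) : Prop :=
  G.SepCut A B C ∧ ∀ D : Set E, G.SepCut A B D → D ⊆ C → D = C

/-- An `s`-`B`-wave: a system of pairwise edge-disjoint paths starting at `s`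
whose set of last edges is a `⊆`-minimal cut separating `s` from `B`. -/
def IsWave (G : Multigraph V E) (s : V) (B : Set V) (W : Set (G.SPath s)) : Prop :=
  G.SPathDisjoint W ∧ G.IsMinSepCut {s} B (G.lastEdges W)

/-- An Erdős–Menger `st`-cut: an `st`-cut which is orthogonal to some system of
pairwise edge-disjoint `st`-paths, i.e. it consists of exactly one edge chosen
from each path of the system. -/
def IsEMCut (G : Multigraph V E) (s t : V) (C : Set E) : Prop :=
  (∃ X : Set V, s ∈ X ∧ t ∉ X ∧ C = G.cut X) ∧
  ∃ P : Set (G.STPath s t), G.STPathDisjoint P ∧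
    (∀ p ∈ P, ∃! e, e ∈ C ∧ e ∈ p.walk.edges) ∧
    (∀ e ∈ C, ∃ p ∈ P, e ∈ p.walk.edges)

/-- The order `≼` on `st`-cuts: the `s`-side of `C` is contained in the
`s`-side of `D` (in a connected graph the `s`-side is unique). -/
def CutLE (G : Multigraph V E) (s t : V) (C D : Set E) : Prop :=
  ∃ X Y : Set V, s ∈ X ∧ t ∉ X ∧ C = G.cut X ∧ s ∈ Y ∧ t ∉ Y ∧ D = G.cut Y ∧ X ⊆ Y

/-- A cut of the form `C_W` for some `st`-wave `W`. -/
def IsWaveCut (G : Multigraph V E) (s t : V) (C : Set E) : Prop :=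
  ∃ W : Set (G.SPath s), G.IsWave s {t} W ∧ G.lastEdges W = C

/-- Deletion of a set of edges. -/
def deleteEdges (G : Multigraph V E) (F : Set E) : Multigraph V {e : E // e ∉ F} where
  inc e := G.inc e.1
  not_isDiag e := G.not_isDiag e.1

open Classical in
/-- Contraction of the vertex set `X` to the vertex `s` (edges inside `X` are
deleted, edges leaving `X` are redirected to `s`). -/
noncomputable def contract (G : Multigraph V E) (X : Set V) (s : V) :
    Multigraph V {e : E // ¬ (Sym2.map (fun v => if v ∈ X then s else v) (G.inc e)).IsDiag} where
  inc e := Sym2.map (fun v => if v ∈ X then s else v) (G.inc e.1)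
  not_isDiag e := e.2

/-- Reachability inside a set `S` of vertices. -/
def ReachableIn (G : Multigraph V E) (S : Set V) (x y : V) : Prop :=
  ∃ p : G.Walk x y, ∀ z ∈ p.support, z ∈ S

/-- `Y` is (the vertex set of) a connected component of the subgraph of `G`
induced by `S`. -/
def IsComponentOf (G : Multigraph V E) (Y S : Set V) : Prop :=
  Y.Nonempty ∧ Y ⊆ S ∧ ∀ x ∈ Y, ∀ y ∈ S, (G.ReachableIn S x y ↔ y ∈ Y)

/-- A cycle in a multigraph (a closed walk with distinct edges whose
vertices are distinct except that the first one equals the last one). -/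
structure Cycle (G : Multigraph V E) : Type (max u v) where
  base : V
  walk : G.Walk base base
  edges_ne_nil : walk.edges ≠ []
  edges_nodup : walk.edges.Nodup
  support_tail_nodup : walk.support.tail.Nodup

/-- A graph is Eulerian if its edge set can be partitioned into
edge sets of cycles. -/
def IsEulerian (G : Multigraph V E) : Prop :=
  ∃ C : Set G.Cycle,
    (∀ c ∈ C, ∀ d ∈ C, c ≠ d → ∀ e, e ∈ c.walk.edges → e ∉ d.walk.edges) ∧
    ∀ e : E, ∃ c ∈ C, e ∈ c.walk.edges

/-- A `T`-partition: a family `{A t : t ∈ T}` of pairwise disjoint vertex sets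
with `A t ∩ T = {t}`. -/
def IsTPartition (T : Set V) (A : V → Set V) : Prop :=
  (∀ t ∈ T, A t ∩ T = {t}) ∧
  ∀ t₁ ∈ T, ∀ t₂ ∈ T, t₁ ≠ t₂ → Disjoint (A t₁) (A t₂)

end Multigraph
namespace Multigraph

variable {V : Type u} {E : Type v} {G : Multigraph V E}

namespace Walk

/-- Concatenation of walks. -/
def append : ∀ {u v w : V}, G.Walk u v → G.Walk v w → G.Walk u w
  | _, _, _, .nil _, q => q
  | _, _, _, .cons e he p, q => .cons e he (p.append q)

@[simp] theorem nil_append {v w : V} (q : G.Walk v w) : (Walk.nil v).append q = q := rfl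

@[simp] theorem cons_append {u x v w : V} (e : E) (he : G.inc e = s(u, x))
    (p : G.Walk x v) (q : G.Walk v w) :
    (Walk.cons e he p).append q = Walk.cons e he (p.append q) := rfl

theorem support_ne_nil : ∀ {u v : V} (p : G.Walk u v), p.support ≠ []
  | _, _, .nil _ => by simp [support]
  | _, _, .cons _ _ _ => by simp [support]

theorem support_eq_cons : ∀ {u v : V} (p : G.Walk u v), p.support = u :: p.support.tail
  | _, _, .nil _ => rfl
  | _, _, .cons _ _ _ => rfl

theorem start_mem_support {u v : V} (p : G.Walk u v) : u ∈ p.support := by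
  rw [support_eq_cons]; exact List.mem_cons_self

theorem getLast?_support : ∀ {u v : V} (p : G.Walk u v), p.support.getLast? = some v
  | _, _, .nil v => rfl
  | _, _, @Walk.cons _ _ _ u x v e he p => by
    have h := getLast?_support p
    rw [support, support_eq_cons p, List.getLast?_cons_cons, ← support_eq_cons p]
    exact h

theorem end_mem_support : ∀ {u v : V} (p : G.Walk u v), v ∈ p.support
  | _, _, .nil v => List.mem_singleton.mpr rfl
  | _, _, .cons e he p => List.mem_cons_of_mem _ (end_mem_support p)

theorem support_append : ∀ {u v w : V} (p : G.Walk u v) (q : G.Walk v w),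
    (p.append q).support = p.support ++ q.support.tail
  | _, _, _, .nil _, q => (support_eq_cons q).trans rfl
  | _, _, _, .cons e he p, q => by
    rw [cons_append, support, support, support_append p q]; rfl

theorem edges_append : ∀ {u v w : V} (p : G.Walk u v) (q : G.Walk v w),
    (p.append q).edges = p.edges ++ q.edges
  | _, _, _, .nil _, q => rfl
  | _, _, _, .cons e he p, q => by
    rw [cons_append, edges, edges, edges_append p q]; rfl

/-- `w.Traverses e a b`: the walk `w` has a step from `a` to `b` along edge `e`. -/
def Traverses : ∀ {u w : V}, G.Walk u w → E → V → V → Prop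
  | _, _, .nil _, _, _, _ => False
  | u, _, @Walk.cons _ _ _ _ x _ e' _ p, e, a, b => (e = e' ∧ a = u ∧ b = x) ∨ p.Traverses e a b

@[simp] theorem traverses_nil {v : V} (e : E) (a b : V) : ¬ (Walk.nil (G := G) v).Traverses e a b :=
  fun h => h

theorem traverses_cons {u x w : V} (f : E) (hf : G.inc f = s(u, x)) (p : G.Walk x w)
    (e : E) (a b : V) :
    (Walk.cons f hf p).Traverses e a b ↔ (e = f ∧ a = u ∧ b = x) ∨ p.Traverses e a b :=
  Iff.rfl

theorem Traverses.inc : ∀ {u w : V} {p : G.Walk u w} {e a b},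
    p.Traverses e a b → G.inc e = s(a, b)
  | _, _, .nil _, _, _, _, h => absurd h (traverses_nil _ _ _)
  | _, _, .cons e' he' p, e, a, b, h => by
    rcases h with ⟨rfl, rfl, rfl⟩ | h
    · exact he'
    · exact h.inc

theorem Traverses.mem_edges : ∀ {u w : V} {p : G.Walk u w} {e a b},
    p.Traverses e a b → e ∈ p.edges
  | _, _, .nil _, _, _, _, h => absurd h (traverses_nil _ _ _)
  | _, _, .cons e' he' p, e, a, b, h => by
    rcases h with ⟨rfl, rfl, rfl⟩ | h
    · exact List.mem_cons_self
    · exact List.mem_cons_of_mem _ h.mem_edges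

theorem exists_traverses_of_mem_edges : ∀ {u w : V} {p : G.Walk u w} {e},
    e ∈ p.edges → ∃ a b, p.Traverses e a b
  | _, _, .nil _, e, h => by simp [edges] at h
  | _, _, @Walk.cons _ _ _ _ x _ e' he' p, e, h => by
    rcases List.mem_cons.mp h with rfl | h
    · exact ⟨_, x, Or.inl ⟨rfl, rfl, rfl⟩⟩
    · obtain ⟨a, b, ht⟩ := exists_traverses_of_mem_edges h
      exact ⟨a, b, Or.inr ht⟩

theorem Traverses.target_mem_tail : ∀ {u w : V} {p : G.Walk u w} {e a b},
    p.Traverses e a b → b ∈ p.support.tail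
  | _, _, .nil _, _, _, _, h => absurd h (traverses_nil _ _ _)
  | _, _, .cons e' he' p, e, a, b, h => by
    rcases h with ⟨rfl, rfl, rfl⟩ | h
    · exact start_mem_support p
    · exact List.mem_of_mem_tail h.target_mem_tail

theorem Traverses.source_mem_dropLast : ∀ {u w : V} {p : G.Walk u w} {e a b},
    p.Traverses e a b → a ∈ p.support.dropLast
  | _, _, .nil _, _, _, _, h => absurd h (traverses_nil _ _ _)
  | _, _, @Walk.cons _ _ _ u x w e' he' p, e, a, b, h => by
    have hd : (Walk.cons e' he' p).support.dropLast = u :: p.support.dropLast := by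
      rw [support, support_eq_cons p, List.dropLast_cons₂, ← support_eq_cons p]
    rcases h with ⟨rfl, rfl, rfl⟩ | h
    · rw [hd]; exact List.mem_cons_self
    · rw [hd]; exact List.mem_cons_of_mem _ h.source_mem_dropLast

theorem Traverses.source_mem_support {u w : V} {p : G.Walk u w} {e a b}
    (h : p.Traverses e a b) : a ∈ p.support := by
  have := h.source_mem_dropLast
  exact List.dropLast_subset _ this

theorem Traverses.target_mem_support {u w : V} {p : G.Walk u w} {e a b}
    (h : p.Traverses e a b) : b ∈ p.support :=
  List.mem_of_mem_tail h.target_mem_tail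

theorem mem_support_of_mem_edges {u w : V} {p : G.Walk u w} {e : E} {x : V}
    (he : e ∈ p.edges) (hx : x ∈ G.inc e) : x ∈ p.support := by
  obtain ⟨a, b, ht⟩ := exists_traverses_of_mem_edges he
  rw [ht.inc, Sym2.mem_iff] at hx
  rcases hx with rfl | rfl
  · exact ht.source_mem_support
  · exact ht.target_mem_support

theorem eq_of_edges_eq_nil : ∀ {u w : V} {p : G.Walk u w}, p.edges = [] → u = w
  | _, _, .nil _, _ => rfl
  | _, _, .cons e he p, h => by simp [edges] at h

theorem edges_ne_nil_of_ne {u w : V} (p : G.Walk u w) (h : u ≠ w) : p.edges ≠ [] :=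
  fun hn => h (eq_of_edges_eq_nil hn)

theorem traverses_append {u v w : V} (p : G.Walk u v) (q : G.Walk v w) (e : E) (a b : V) :
    (p.append q).Traverses e a b ↔ p.Traverses e a b ∨ q.Traverses e a b := by
  induction p with
  | nil => simp [Traverses]
  | cons e' he' p ih => rw [cons_append, traverses_cons, traverses_cons, ih, or_assoc]

end Walk
end Multigraph
namespace Multigraph
namespace Walk

variable {V : Type u} {E : Type v} {G : Multigraph V E}

theorem edges_nodup_of_support_nodup : ∀ {u w : V} {p : G.Walk u w},
    p.support.Nodup → p.edges.Nodup
  | _, _, .nil _, _ => List.nodup_nil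
  | _, _, @Walk.cons _ _ _ u x w e he p, h => by
    rw [support] at h
    have h1 : u ∉ p.support := (List.nodup_cons.mp h).1
    have h2 := edges_nodup_of_support_nodup (List.nodup_cons.mp h).2
    rw [edges, List.nodup_cons]
    refine ⟨fun hmem => h1 ?_, h2⟩
    exact mem_support_of_mem_edges hmem (by rw [he]; exact Sym2.mem_mk_left _ _)

/-- In a walk with `Nodup` support starting at `s`, the edges incident with `s`
are exactly the first edge. -/
theorem head?_edges_eq_some_iff {s v : V} {p : G.Walk s v} (h : p.support.Nodup) (e : E) :
    p.edges.head? = some e ↔ e ∈ p.edges ∧ s ∈ G.inc e := by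
  constructor
  · rintro hh
    cases p with
    | nil => simp [edges] at hh
    | cons f hf q =>
      rw [edges, List.head?_cons, Option.some_inj] at hh
      subst hh
      exact ⟨List.mem_cons_self, by rw [hf]; exact Sym2.mem_mk_left _ _⟩
  · rintro ⟨hmem, hinc⟩
    cases p with
    | nil => simp [edges] at hmem
    | cons f hf q =>
      rw [edges, List.head?_cons, Option.some_inj]
      rcases List.mem_cons.mp hmem with rfl | hmem
      · rfl
      · exfalso
        have hs : s ∈ q.support := mem_support_of_mem_edges hmem hinc
        rw [support, List.nodup_cons] at h
        exact h.1 hs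

theorem start_ne_end_of_edges_ne_nil {u w : V} {p : G.Walk u w}
    (h : p.support.Nodup) (hne : p.edges ≠ []) : u ≠ w := by
  cases p with
  | nil => simp [edges] at hne
  | cons f hf q =>
    rintro rfl
    rw [support, List.nodup_cons] at h
    exact h.1 (end_mem_support q)

theorem getLast?_edges_eq_some_iff {v t : V} {p : G.Walk v t} (h : p.support.Nodup) (e : E) :
    p.edges.getLast? = some e ↔ e ∈ p.edges ∧ t ∈ G.inc e := by
  induction p with
  | nil => simp [edges]
  | @cons u x w f hf q ih =>
    by_cases hq : q.edges = []
    · have hxw : x = w := eq_of_edges_eq_nil hq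
      subst hxw
      rw [edges, hq]
      simp only [List.getLast?_singleton, List.mem_singleton, Option.some_inj]
      constructor
      · rintro rfl
        exact ⟨rfl, by rw [hf]; exact Sym2.mem_mk_right _ _⟩
      · rintro ⟨rfl, _⟩
        rfl
    · rw [support, List.nodup_cons] at h
      have ih' := ih h.2
      have hLast : (f :: q.edges).getLast? = q.edges.getLast? := by
        cases hq' : q.edges with
        | nil => exact absurd hq' hq
        | cons b l => rw [List.getLast?_cons_cons]
      rw [edges, hLast, ih']
      constructor
      · rintro ⟨hmem, hinc⟩
        exact ⟨List.mem_cons_of_mem _ hmem, hinc⟩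
      · rintro ⟨hmem, hinc⟩
        rcases List.mem_cons.mp hmem with rfl | hmem
        · exfalso
          rw [hf, Sym2.mem_iff] at hinc
          rcases hinc with rfl | rfl
          · exact h.1 (end_mem_support q)
          · exact start_ne_end_of_edges_ne_nil h.2 hq rfl
        · exact ⟨hmem, hinc⟩

end Walk
end Multigraph
namespace Multigraph
namespace Walk

variable {V : Type u} {E : Type v} {G : Multigraph V E}

theorem exists_head_traverses {s v : V} (p : G.Walk s v) (h : p.edges ≠ []) :
    ∃ e b, p.edges.head? = some e ∧ p.Traverses e s b := by
  cases p with
  | nil => simp [edges] at h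
  | @cons u x w f hf q => exact ⟨f, x, rfl, Or.inl ⟨rfl, rfl, rfl⟩⟩

theorem exists_last_traverses : ∀ {v t : V} (p : G.Walk v t), p.edges ≠ [] →
    ∃ e a, p.edges.getLast? = some e ∧ p.Traverses e a t
  | _, _, .nil _, h => by simp [edges] at h
  | _, _, @Walk.cons _ _ _ u x w f hf q, h => by
    by_cases hq : q.edges = []
    · have hxw : x = w := eq_of_edges_eq_nil hq
      subst hxw
      refine ⟨f, u, ?_, Or.inl ⟨rfl, rfl, rfl⟩⟩
      rw [edges, hq]; rfl
    · obtain ⟨e, a, h1, h2⟩ := exists_last_traverses q hq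
      refine ⟨e, a, ?_, Or.inr h2⟩
      rw [edges]
      cases hq' : q.edges with
      | nil => exact absurd hq' hq
      | cons b l => rw [List.getLast?_cons_cons, ← hq']; exact h1

theorem traverses_eq_of_nodup : ∀ {u w : V} {p : G.Walk u w} {e a b a' b'},
    p.edges.Nodup → p.Traverses e a b → p.Traverses e a' b' → a = a' ∧ b = b'
  | _, _, .nil _, _, _, _, _, _, _, h, _ => absurd h (traverses_nil _ _ _)
  | _, _, .cons f hf q, e, a, b, a', b', hnd, h1, h2 => by
    rw [edges, List.nodup_cons] at hnd
    rcases h1 with ⟨rfl, rfl, rfl⟩ | h1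
    · rcases h2 with ⟨_, rfl, rfl⟩ | h2
      · exact ⟨rfl, rfl⟩
      · exact absurd h2.mem_edges hnd.1
    · rcases h2 with ⟨rfl, rfl, rfl⟩ | h2
      · exact absurd h1.mem_edges hnd.1
      · exact traverses_eq_of_nodup hnd.2 h1 h2

theorem exists_split_of_traverses : ∀ {u w : V} {p : G.Walk u w} {e a b},
    p.Traverses e a b → ∃ (p₁ : G.Walk u a) (he : G.inc e = s(a, b)) (p₂ : G.Walk b w),
      p = p₁.append (Walk.cons e he p₂)
  | _, _, .nil _, _, _, _, h => absurd h (traverses_nil _ _ _)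
  | _, _, @Walk.cons _ _ _ u x w f hf q, e, a, b, h => by
    rcases h with ⟨rfl, rfl, rfl⟩ | h
    · exact ⟨Walk.nil _, hf, q, rfl⟩
    · obtain ⟨p₁, he, p₂, hp⟩ := exists_split_of_traverses h
      exact ⟨Walk.cons f hf p₁, he, p₂, by rw [cons_append, hp]⟩

theorem exists_split_last {u w : V} {p : G.Walk u w} (Bad : E → Prop)
    (h : ∃ e ∈ p.edges, Bad e) :
    ∃ (a b : V) (p₁ : G.Walk u a) (e : E) (he : G.inc e = s(a, b)) (p₂ : G.Walk b w),
      p = p₁.append (Walk.cons e he p₂) ∧ Bad e ∧ ∀ f ∈ p₂.edges, ¬ Bad f := by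
  induction p with
  | nil => simp [edges] at h
  | @cons u x w f hf q ih =>
    by_cases hq : ∃ e ∈ q.edges, Bad e
    · obtain ⟨a, b, p₁, e, he, p₂, hp, hbad, hclean⟩ := ih hq
      exact ⟨a, b, Walk.cons f hf p₁, e, he, p₂, by rw [cons_append, hp], hbad, hclean⟩
    · obtain ⟨e, hmem, hbad⟩ := h
      rcases List.mem_cons.mp hmem with rfl | hmem
      · exact ⟨u, x, Walk.nil u, e, hf, q, rfl, hbad, fun f hmem hb => hq ⟨f, hmem, hb⟩⟩
      · exact absurd ⟨e, hmem, hbad⟩ hq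

theorem exists_suffixFrom : ∀ {u w : V} (p : G.Walk u w) (x : V), x ∈ p.support →
    ∃ q : G.Walk x w, q.support.IsSuffix p.support ∧
      ∀ e a b, q.Traverses e a b → p.Traverses e a b
  | _, _, .nil v, x, hx => by
    rw [support, List.mem_singleton] at hx
    subst hx
    exact ⟨Walk.nil x, List.suffix_refl _, fun e a b h => h⟩
  | _, _, @Walk.cons _ _ _ u y w f hf q, x, hx => by
    rcases List.mem_cons.mp hx with rfl | hx
    · exact ⟨Walk.cons f hf q, List.suffix_refl _, fun e a b h => h⟩
    · obtain ⟨q', hsuf, hsteps⟩ := exists_suffixFrom q x hx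
      refine ⟨q', ?_, fun e a b h => Or.inr (hsteps e a b h)⟩
      exact hsuf.trans (List.suffix_cons _ _)

theorem exists_simple : ∀ {u w : V} (p : G.Walk u w),
    ∃ q : G.Walk u w, q.support.Nodup ∧ ∀ e a b, q.Traverses e a b → p.Traverses e a b
  | _, _, .nil v => ⟨Walk.nil v, by simp [support], fun e a b h => h⟩
  | _, _, @Walk.cons _ _ _ u y w f hf q => by
    obtain ⟨q', hnd, hsteps⟩ := exists_simple q
    by_cases hu : u ∈ q'.support
    · obtain ⟨q'', hsuf, hsteps'⟩ := exists_suffixFrom q' u hu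
      refine ⟨q'', hsuf.sublist.nodup hnd, fun e a b h => Or.inr (hsteps e a b (hsteps' e a b h))⟩
    · refine ⟨Walk.cons f hf q', ?_, fun e a b h => ?_⟩
      · rw [support, List.nodup_cons]; exact ⟨hu, hnd⟩
      · rcases h with ⟨rfl, rfl, rfl⟩ | h
        · exact Or.inl ⟨rfl, rfl, rfl⟩
        · exact Or.inr (hsteps e a b h)

theorem edges_subset_of_traverses_subset {u w : V} {p q : G.Walk u w}
    (h : ∀ e a b, p.Traverses e a b → q.Traverses e a b) : ∀ e ∈ p.edges, e ∈ q.edges := by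
  intro e he
  obtain ⟨a, b, ht⟩ := exists_traverses_of_mem_edges he
  exact (h e a b ht).mem_edges

end Walk
end Multigraph
namespace Multigraph
namespace Walk

variable {V : Type u} {E : Type v} {G : Multigraph V E}

theorem all_not_mem_of_no_reentry : ∀ {u w : V} (p : G.Walk u w) (X : Set V), u ∉ X →
    (∀ e a b, p.Traverses e a b → b ∈ X → a ∈ X) → ∀ z ∈ p.support, z ∉ X
  | _, _, .nil v, X, hu, _, z, hz => by
    rw [support, List.mem_singleton] at hz; exact hz ▸ hu
  | _, _, @Walk.cons _ _ _ u x w f hf q, X, hu, hre, z, hz => by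
    have hx : x ∉ X := fun hxX => hu (hre f u x (Or.inl ⟨rfl, rfl, rfl⟩) hxX)
    rcases List.mem_cons.mp hz with rfl | hz
    · exact hu
    · exact all_not_mem_of_no_reentry q X hx
        (fun e a b ht hb => hre e a b (Or.inr ht) hb) z hz

theorem traverses_cut_out {u w : V} {p : G.Walk u w} {X : Set V} {e : E} {a b : V}
    (hre : ∀ e a b, p.Traverses e a b → b ∈ X → a ∈ X)
    (ht : p.Traverses e a b) (hc : e ∈ G.cut X) : a ∈ X ∧ b ∉ X := by
  obtain ⟨x, y, hxy, hx, hy⟩ := hc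
  have hinc := ht.inc
  rw [hxy, Sym2.eq_iff] at hinc
  rcases hinc with ⟨h1, h2⟩ | ⟨h1, h2⟩
  · exact ⟨h1 ▸ hx, h2 ▸ hy⟩
  · exact absurd (hre e a b ht (h1 ▸ hx)) (h2 ▸ hy)

theorem existsUnique_cut_edge : ∀ {u w : V} (p : G.Walk u w) (X : Set V),
    p.edges.Nodup → u ∈ X → w ∉ X →
    (∀ e a b, p.Traverses e a b → b ∈ X → a ∈ X) →
    ∃! e, e ∈ G.cut X ∧ e ∈ p.edges
  | _, _, .nil v, X, _, hu, hw, _ => absurd hu hw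
  | _, _, @Walk.cons _ _ _ u x w f hf q, X, hnd, hu, hw, hre => by
    rw [edges, List.nodup_cons] at hnd
    have hre' : ∀ e a b, q.Traverses e a b → b ∈ X → a ∈ X :=
      fun e a b ht hb => hre e a b (Or.inr ht) hb
    by_cases hx : x ∈ X
    · obtain ⟨e₀, ⟨he₀c, he₀m⟩, huniq⟩ := existsUnique_cut_edge q X hnd.2 hx hw hre'
      refine ⟨e₀, ⟨he₀c, List.mem_cons_of_mem _ he₀m⟩, ?_⟩
      rintro f' ⟨hf'c, hf'm⟩
      rcases List.mem_cons.mp hf'm with rfl | hf'm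
      · exfalso
        obtain ⟨x', y', hxy, hx', hy'⟩ := hf'c
        rw [hf, Sym2.eq_iff] at hxy
        rcases hxy with ⟨rfl, rfl⟩ | ⟨rfl, rfl⟩
        · exact hy' hx
        · exact hy' hu
      · exact huniq f' ⟨hf'c, hf'm⟩
    · refine ⟨f, ⟨⟨u, x, hf, hu, hx⟩, List.mem_cons_self⟩, ?_⟩
      rintro f' ⟨hf'c, hf'm⟩
      rcases List.mem_cons.mp hf'm with rfl | hf'm
      · rfl
      · exfalso
        obtain ⟨a, b, ht⟩ := exists_traverses_of_mem_edges hf'm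
        have := traverses_cut_out hre' ht hf'c
        exact all_not_mem_of_no_reentry q X hx hre' a ht.source_mem_support this.1

end Walk
end Multigraph
namespace Multigraph

variable {V : Type u} {E : Type v} {G : Multigraph V E}

theorem not_mem_dropLast_of_getLast? {α : Type*} {l : List α} {x : α}
    (h : l.Nodup) (hx : l.getLast? = some x) : x ∉ l.dropLast := by
  intro hmem
  have hl : l.dropLast ++ [x] = l := List.dropLast_append_getLast? _ hx
  rw [← hl, List.nodup_append] at h
  exact h.2.2 x hmem x (List.mem_singleton.mpr rfl) rfl

theorem mem_inci {v : V} {e : E} : e ∈ G.inci v ↔ v ∈ G.inc e := Iff.rfl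

/-- A walk from `s` with `Nodup` support never has a step into `s`. -/
theorem Walk.target_ne_start {s v : V} {p : G.Walk s v} (hnd : p.support.Nodup)
    {e : E} {a b : V} (ht : p.Traverses e a b) : b ≠ s := by
  intro rfl'
  subst rfl'
  have h1 := ht.target_mem_tail
  rw [Walk.support_eq_cons p, List.nodup_cons] at hnd
  exact hnd.1 h1

/-- A walk to `t` with `Nodup` support never has a step out of `t`. -/
theorem Walk.source_ne_end {v t : V} {p : G.Walk v t} (hnd : p.support.Nodup)
    {e : E} {a b : V} (ht : p.Traverses e a b) : a ≠ t := by
  intro rfl'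
  subst rfl'
  exact not_mem_dropLast_of_getLast? hnd (Walk.getLast?_support p) ht.source_mem_dropLast

/-- Base case of the augmentation: the augmenting walk uses no edge of `P`. -/
theorem aug_base {s t : V} (P : Set (G.STPath s t)) (hP : G.STPathDisjoint P)
    (W : G.Walk s t) (hnd : W.support.Nodup)
    (hfree : ∀ e ∈ W.edges, ∀ p ∈ P, e ∉ p.walk.edges) :
    ∃ Q : Set (G.STPath s t), G.STPathDisjoint Q ∧
      (∀ f, (f ∈ G.inci s ∧ ∃ q ∈ Q, f ∈ q.walk.edges) ↔
        (W.edges.head? = some f ∨ (f ∈ G.inci s ∧ ∃ p ∈ P, f ∈ p.walk.edges))) ∧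
      (∀ f, (f ∈ G.inci t ∧ ∃ q ∈ Q, f ∈ q.walk.edges) ↔
        (W.edges.getLast? = some f ∨ (f ∈ G.inci t ∧ ∃ p ∈ P, f ∈ p.walk.edges))) := by
  refine ⟨insert ⟨W, hnd⟩ P, ?_, ?_, ?_⟩
  · intro p hp q hq hne f hfp hfq
    rcases Set.mem_insert_iff.mp hp with rfl | hp
    · rcases Set.mem_insert_iff.mp hq with rfl | hq
      · exact hne rfl
      · exact hfree f hfp q hq hfq
    · rcases Set.mem_insert_iff.mp hq with rfl | hq
      · exact hfree f hfq p hp hfp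
      · exact hP p hp q hq hne f hfp hfq
  · intro f
    constructor
    · rintro ⟨hfi, qq, hqq, hfq⟩
      rcases Set.mem_insert_iff.mp hqq with rfl | hqq
      · exact Or.inl ((Walk.head?_edges_eq_some_iff hnd f).mpr ⟨hfq, hfi⟩)
      · exact Or.inr ⟨hfi, qq, hqq, hfq⟩
    · rintro (hh | ⟨hfi, p, hp, hfp⟩)
      · obtain ⟨hmem, hinc⟩ := (Walk.head?_edges_eq_some_iff hnd f).mp hh
        exact ⟨hinc, ⟨W, hnd⟩, Set.mem_insert _ _, hmem⟩
      · exact ⟨hfi, p, Set.mem_insert_of_mem _ hp, hfp⟩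
  · intro f
    constructor
    · rintro ⟨hfi, qq, hqq, hfq⟩
      rcases Set.mem_insert_iff.mp hqq with rfl | hqq
      · exact Or.inl ((Walk.getLast?_edges_eq_some_iff hnd f).mpr ⟨hfq, hfi⟩)
      · exact Or.inr ⟨hfi, qq, hqq, hfq⟩
    · rintro (hh | ⟨hfi, p, hp, hfp⟩)
      · obtain ⟨hmem, hinc⟩ := (Walk.getLast?_edges_eq_some_iff hnd f).mp hh
        exact ⟨hinc, ⟨W, hnd⟩, Set.mem_insert _ _, hmem⟩
      · exact ⟨hfi, p, Set.mem_insert_of_mem _ hp, hfp⟩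

end Multigraph
namespace Multigraph

variable {V : Type u} {E : Type v} {G : Multigraph V E}

open Walk in
open Classical in
theorem aug {s t : V} (hst : s ≠ t) :
    ∀ (n : ℕ) (P : Set (G.STPath s t)), G.STPathDisjoint P →
    ∀ W : G.Walk s t, W.support.Nodup →
    (∀ e a b, W.Traverses e a b →
      (∀ p ∈ P, e ∉ p.walk.edges) ∨ ∃ p ∈ P, p.walk.Traverses e b a) →
    W.edges.countP (fun e => decide (∃ p ∈ P, e ∈ p.walk.edges)) ≤ n →
    ∃ Q : Set (G.STPath s t), G.STPathDisjoint Q ∧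
      (∀ f, (f ∈ G.inci s ∧ ∃ q ∈ Q, f ∈ q.walk.edges) ↔
        (W.edges.head? = some f ∨ (f ∈ G.inci s ∧ ∃ p ∈ P, f ∈ p.walk.edges))) ∧
      (∀ f, (f ∈ G.inci t ∧ ∃ q ∈ Q, f ∈ q.walk.edges) ↔
        (W.edges.getLast? = some f ∨ (f ∈ G.inci t ∧ ∃ p ∈ P, f ∈ p.walk.edges))) := by
  intro n
  induction n with
  | zero =>
    intro P hP W hnd hres hcount
    refine aug_base P hP W hnd ?_
    intro e he p hp hep
    have h0 : W.edges.countP (fun e => decide (∃ p ∈ P, e ∈ p.walk.edges)) = 0 :=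
      Nat.le_zero.mp hcount
    have := List.countP_eq_zero.mp h0 e he
    simp only [decide_eq_true_eq] at this
    exact this ⟨p, hp, hep⟩
  | succ n ih =>
    intro P hP W hnd hres hcount
    by_cases h0 : W.edges.countP (fun e => decide (∃ p ∈ P, e ∈ p.walk.edges)) = 0
    · refine aug_base P hP W hnd ?_
      intro e he p hp hep
      have := List.countP_eq_zero.mp h0 e he
      simp only [decide_eq_true_eq] at this
      exact this ⟨p, hp, hep⟩
    -- there is a bad edge on W
    have hbadex : ∃ e ∈ W.edges, ∃ p ∈ P, e ∈ p.walk.edges := by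
      by_contra hcon
      push_neg at hcon
      exact h0 (List.countP_eq_zero.mpr (by
        intro e he
        simp only [decide_eq_true_eq]
        intro ⟨p, hp, hep⟩
        exact hcon e he p hp hep))
    obtain ⟨a, b, w₁, e, he, w₂, hW, hbad, hclean⟩ :=
      Walk.exists_split_last (fun f => ∃ p ∈ P, f ∈ p.walk.edges) hbadex
    -- the step (a, e, b) on W
    have hstep : W.Traverses e a b := by
      rw [hW, traverses_append]
      exact Or.inr (Or.inl ⟨rfl, rfl, rfl⟩)
    -- e is used backwards by some q ∈ P
    obtain ⟨q, hqP, hqt⟩ : ∃ p ∈ P, p.walk.Traverses e b a := by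
      rcases hres e a b hstep with hfree | hback
      · exact absurd hbad (by
          rintro ⟨p, hp, hep⟩
          exact hfree p hp hep)
      · exact hback
    obtain ⟨q₁, he', q₂, hq⟩ := Walk.exists_split_of_traverses hqt
    -- supports and edges decompositions
    have hWsupp : W.support = w₁.support ++ w₂.support := by
      rw [hW, support_append]; rfl
    have hWed : W.edges = w₁.edges ++ e :: w₂.edges := by
      rw [hW, edges_append]; rfl
    have hqsupp : q.walk.support = q₁.support ++ q₂.support := by
      rw [hq, support_append]; rfl
    have hqed : q.walk.edges = q₁.edges ++ e :: q₂.edges := by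
      rw [hq, edges_append]; rfl
    have hndW := hnd
    rw [hWsupp, List.nodup_append] at hndW
    obtain ⟨hnd1, hnd2, hdisj12⟩ := hndW
    have hndq := q.support_nodup
    rw [hqsupp, List.nodup_append] at hndq
    obtain ⟨hqnd1, hqnd2, hqdisj⟩ := hndq
    have hWednd : W.edges.Nodup := Walk.edges_nodup_of_support_nodup hnd
    have hqednd : q.walk.edges.Nodup := Walk.edges_nodup_of_support_nodup q.support_nodup
    rw [hWed, List.nodup_append] at hWednd
    obtain ⟨hw1nd, hw2nd', hWdisj⟩ := hWednd
    have he_notin_w1 : e ∉ w₁.edges := fun h => hWdisj e h e List.mem_cons_self rfl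
    have he_notin_w2 : e ∉ w₂.edges := (List.nodup_cons.mp hw2nd').1
    have hw2nd : w₂.edges.Nodup := (List.nodup_cons.mp hw2nd').2
    have hWdisj' : ∀ f ∈ w₁.edges, f ∉ w₂.edges :=
      fun f hf hf2 => hWdisj f hf f (List.mem_cons_of_mem _ hf2) rfl
    rw [hqed, List.nodup_append] at hqednd
    obtain ⟨hq1nd, hq2nd', hqeddisj⟩ := hqednd
    have he_notin_q1 : e ∉ q₁.edges := fun h => hqeddisj e h e List.mem_cons_self rfl
    have he_notin_q2 : e ∉ q₂.edges := (List.nodup_cons.mp hq2nd').1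
    have hq2nd : q₂.edges.Nodup := (List.nodup_cons.mp hq2nd').2
    have hqdisj' : ∀ f ∈ q₁.edges, f ∉ q₂.edges :=
      fun f hf hf2 => hqeddisj f hf f (List.mem_cons_of_mem _ hf2) rfl
    -- vertex facts
    have hbs : b ≠ s := Walk.target_ne_start hnd hstep
    have has : a ≠ s := Walk.target_ne_start q.support_nodup hqt
    have hat : a ≠ t := Walk.source_ne_end hnd hstep
    have hbt : b ≠ t := Walk.source_ne_end q.support_nodup hqt
    have hs_notin_w2 : s ∉ w₂.support := fun h => hdisj12 s (Walk.start_mem_support w₁) s h rfl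
    have ht_notin_w1 : t ∉ w₁.support := fun h => hdisj12 t h t (Walk.end_mem_support w₂) rfl
    have hs_notin_q2 : s ∉ q₂.support := fun h => hqdisj s (Walk.start_mem_support q₁) s h rfl
    have ht_notin_q1 : t ∉ q₁.support := fun h => hqdisj t h t (Walk.end_mem_support q₂) rfl
    -- nonemptiness
    have hw1ne : w₁.edges ≠ [] := Walk.edges_ne_nil_of_ne w₁ (fun h => has h.symm)
    have hw2ne : w₂.edges ≠ [] := Walk.edges_ne_nil_of_ne w₂ hbt
    have hq1ne : q₁.edges ≠ [] := Walk.edges_ne_nil_of_ne q₁ (fun h => hbs h.symm)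
    have hq2ne : q₂.edges ≠ [] := Walk.edges_ne_nil_of_ne q₂ hat
    -- new path and new walk
    obtain ⟨pw, hpwnd, hpwsteps⟩ := Walk.exists_simple (q₁.append w₂)
    obtain ⟨W', hW'nd, hW'steps⟩ := Walk.exists_simple (w₁.append q₂)
    set pq : G.STPath s t := ⟨pw, hpwnd⟩ with hpq
    set P' : Set (G.STPath s t) := insert pq (P \ {q}) with hP'def
    have hpw_sub : ∀ f ∈ pw.edges, f ∈ q₁.edges ∨ f ∈ w₂.edges := by
      intro f hf
      have := Walk.edges_subset_of_traverses_subset hpwsteps f hf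
      rw [edges_append] at this
      exact List.mem_append.mp this
    have hW'_sub : ∀ f ∈ W'.edges, f ∈ w₁.edges ∨ f ∈ q₂.edges := by
      intro f hf
      have := Walk.edges_subset_of_traverses_subset hW'steps f hf
      rw [edges_append] at this
      exact List.mem_append.mp this
    -- (C1) edges of q₂ are unused in P'
    have hq2_free : ∀ f ∈ q₂.edges, ∀ p' ∈ P', f ∉ p'.walk.edges := by
      intro f hf p' hp' hfp'
      rcases Set.mem_insert_iff.mp hp' with rfl | hp'
      · rcases hpw_sub f hfp' with h1 | h2
        · exact hqdisj' f h1 hf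
        · exact hclean f h2 ⟨q, hqP, by rw [hqed]; exact List.mem_append_right _ (List.mem_cons_of_mem _ hf)⟩
      · exact hP q hqP p' hp'.1 (fun hh => hp'.2 (by rw [hh]; exact Set.mem_singleton _)) f
          (by rw [hqed]; exact List.mem_append_right _ (List.mem_cons_of_mem _ hf)) hfp'
    -- (O1) P' is edge-disjoint
    have hP' : G.STPathDisjoint P' := by
      intro p1 h1 p2 h2 hne f hf1 hf2
      rcases Set.mem_insert_iff.mp h1 with rfl | h1
      · rcases Set.mem_insert_iff.mp h2 with rfl | h2
        · exact hne rfl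
        · rcases hpw_sub f hf1 with hm | hm
          · exact hP q hqP p2 h2.1 (fun hh => h2.2 (by rw [hh]; exact Set.mem_singleton _)) f
              (by rw [hqed]; exact List.mem_append_left _ hm) hf2
          · exact hclean f hm ⟨p2, h2.1, hf2⟩
      · rcases Set.mem_insert_iff.mp h2 with rfl | h2
        · rcases hpw_sub f hf2 with hm | hm
          · exact hP p1 h1.1 q hqP h1.2 f hf1 (by rw [hqed]; exact List.mem_append_left _ hm)
          · exact hclean f hm ⟨p1, h1.1, hf1⟩
        · exact hP p1 h1.1 p2 h2.1 hne f hf1 hf2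
    -- (O2) W' is a residual walk for P'
    have hres' : ∀ f a' b', W'.Traverses f a' b' →
        (∀ p' ∈ P', f ∉ p'.walk.edges) ∨ ∃ p' ∈ P', p'.walk.Traverses f b' a' := by
      intro f a' b' ht
      have hraw := hW'steps f a' b' ht
      rw [traverses_append] at hraw
      rcases hraw with hw1t | hq2t
      · -- step of w₁, also a step of W
        have hWt : W.Traverses f a' b' := by
          rw [hW, traverses_append]; exact Or.inl hw1t
        have hfw1 : f ∈ w₁.edges := hw1t.mem_edges
        rcases hres f a' b' hWt with hfree | ⟨r, hrP, hrt⟩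
        · refine Or.inl ?_
          intro p' hp' hfp'
          rcases Set.mem_insert_iff.mp hp' with rfl | hp'
          · rcases hpw_sub f hfp' with hm | hm
            · exact hfree q hqP (by rw [hqed]; exact List.mem_append_left _ hm)
            · exact hWdisj' f hfw1 hm
          · exact hfree p' hp'.1 hfp'
        · by_cases hrq : r = q
          · subst hrq
            have := hrt
            rw [hq, traverses_append, traverses_cons] at this
            rcases this with hq1t | ⟨rfl, hb, ha⟩ | hq2t'
            · -- f is traversed by q₁ from b' to a'
              by_cases hfpw : f ∈ pw.edges
              · obtain ⟨x, y, hxy⟩ := Walk.exists_traverses_of_mem_edges hfpw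
                have hxy' := hpwsteps f x y hxy
                rw [traverses_append] at hxy'
                rcases hxy' with hx1 | hx2
                · obtain ⟨hxx, hyy⟩ := Walk.traverses_eq_of_nodup hq1nd hx1 hq1t
                  refine Or.inr ⟨pq, Set.mem_insert _ _, ?_⟩
                  rw [← hxx, ← hyy]
                  exact hxy
                · exact absurd (hclean f hx2.mem_edges)
                    (fun hcc => hcc ⟨r, hrP, by rw [hqed]; exact List.mem_append_left _ hq1t.mem_edges⟩)
              · refine Or.inl ?_
                intro p' hp' hfp'
                rcases Set.mem_insert_iff.mp hp' with rfl | hp'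
                · exact hfpw hfp'
                · exact hP r hrP p' hp'.1 (fun hh => hp'.2 (by rw [hh]; exact Set.mem_singleton _)) f
                    (by rw [hqed]; exact List.mem_append_left _ hq1t.mem_edges) hfp'
            · exact absurd hfw1 (by rw [hb] at *; exact he_notin_w1)
            · exact Or.inl (hq2_free f hq2t'.mem_edges)
          · exact Or.inr ⟨r, Set.mem_insert_of_mem _ ⟨hrP, hrq⟩, hrt⟩
      · -- step of q₂: free in P'
        exact Or.inl (hq2_free f hq2t.mem_edges)
    -- (O4) the count decreases
    have hcount' : W'.edges.countP (fun f => decide (∃ p' ∈ P', f ∈ p'.walk.edges)) ≤ n := by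
      have hsub : W'.edges ⊆ (w₁.append q₂).edges :=
        fun f hf => Walk.edges_subset_of_traverses_subset hW'steps f hf
      have hW'ednd : W'.edges.Nodup := Walk.edges_nodup_of_support_nodup hW'nd
      have h1 : W'.edges.countP (fun f => decide (∃ p' ∈ P', f ∈ p'.walk.edges)) ≤
          (w₁.append q₂).edges.countP (fun f => decide (∃ p' ∈ P', f ∈ p'.walk.edges)) :=
        (hW'ednd.subperm hsub).countP_le _
      rw [edges_append, List.countP_append] at h1
      have h2 : q₂.edges.countP (fun f => decide (∃ p' ∈ P', f ∈ p'.walk.edges)) = 0 := by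
        rw [List.countP_eq_zero]
        intro f hf
        simp only [decide_eq_true_eq]
        rintro ⟨p', hp', hfp'⟩
        exact hq2_free f hf p' hp' hfp'
      have h3 : w₁.edges.countP (fun f => decide (∃ p' ∈ P', f ∈ p'.walk.edges)) ≤
          w₁.edges.countP (fun f => decide (∃ p ∈ P, f ∈ p.walk.edges)) := by
        refine List.countP_mono_left ?_
        intro f hf
        simp only [decide_eq_true_eq]
        rintro ⟨p', hp', hfp'⟩
        rcases Set.mem_insert_iff.mp hp' with rfl | hp'
        · rcases hpw_sub f hfp' with hm | hm
          · exact ⟨q, hqP, by rw [hqed]; exact List.mem_append_left _ hm⟩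
          · exact absurd hm (hWdisj' f hf)
        · exact ⟨p', hp'.1, hfp'⟩
      have h4 : w₁.edges.countP (fun f => decide (∃ p ∈ P, f ∈ p.walk.edges)) + 1 ≤ n + 1 := by
        have : W.edges.countP (fun f => decide (∃ p ∈ P, f ∈ p.walk.edges)) =
            w₁.edges.countP (fun f => decide (∃ p ∈ P, f ∈ p.walk.edges)) +
            (e :: w₂.edges).countP (fun f => decide (∃ p ∈ P, f ∈ p.walk.edges)) := by
          rw [hWed, List.countP_append]
        have he1 : 1 ≤ (e :: w₂.edges).countP (fun f => decide (∃ p ∈ P, f ∈ p.walk.edges)) := by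
          rw [List.countP_cons_of_pos (by simp only [decide_eq_true_eq]; exact hbad)]
          omega
        omega
      omega
    -- apply the induction hypothesis
    obtain ⟨Q, hQdisj, hQs, hQt⟩ := ih P' hP' W' hW'nd hres' hcount'
    -- identify the distinguished edges
    obtain ⟨h₁, b₁, hh₁, hth₁⟩ := Walk.exists_head_traverses w₁ hw1ne
    have hh₁s : s ∈ G.inc h₁ := by rw [hth₁.inc]; exact Sym2.mem_mk_left _ _
    have hWhead : W.edges.head? = some h₁ := by
      rw [hWed, List.head?_append_of_ne_nil _ hw1ne]; exact hh₁
    have hW'ne : W'.edges ≠ [] := Walk.edges_ne_nil_of_ne W' hst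
    have hW'head : W'.edges.head? = some h₁ := by
      obtain ⟨f₀, b₀, hf₀head, hf₀t⟩ := Walk.exists_head_traverses W' hW'ne
      have hf₀s : s ∈ G.inc f₀ := by rw [hf₀t.inc]; exact Sym2.mem_mk_left _ _
      rcases hW'_sub f₀ hf₀t.mem_edges with hm | hm
      · have := (Walk.head?_edges_eq_some_iff hnd1 f₀).mpr ⟨hm, hf₀s⟩
        rw [this] at hh₁
        rw [hf₀head, Option.some_inj.mp hh₁]
      · exact absurd (Walk.mem_support_of_mem_edges hm hf₀s) hs_notin_q2
    obtain ⟨l₂, a₂, hl₂last, hl₂t⟩ := Walk.exists_last_traverses q₂ hq2ne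
    have hl₂tinc : t ∈ G.inc l₂ := by rw [hl₂t.inc]; exact Sym2.mem_mk_right _ _
    have hqlast : q.walk.edges.getLast? = some l₂ := by
      rw [hqed, List.getLast?_append_of_ne_nil _ (List.cons_ne_nil _ _)]
      cases hq2' : q₂.edges with
      | nil => exact absurd hq2' hq2ne
      | cons c l => rw [List.getLast?_cons_cons, ← hq2']; exact hl₂last
    have hW'last : W'.edges.getLast? = some l₂ := by
      obtain ⟨g, a₃, hg, hgt⟩ := Walk.exists_last_traverses W' hW'ne
      have hgtinc : t ∈ G.inc g := by rw [hgt.inc]; exact Sym2.mem_mk_right _ _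
      rcases hW'_sub g hgt.mem_edges with hm | hm
      · exact absurd (Walk.mem_support_of_mem_edges hm hgtinc) ht_notin_w1
      · have := (Walk.getLast?_edges_eq_some_iff hqnd2 g).mpr ⟨hm, hgtinc⟩
        rw [this] at hl₂last
        rw [hg, Option.some_inj.mp hl₂last.symm]
    obtain ⟨lw, a₄, hlw, hlwt⟩ := Walk.exists_last_traverses w₂ hw2ne
    have hlwtinc : t ∈ G.inc lw := by rw [hlwt.inc]; exact Sym2.mem_mk_right _ _
    have hWlast : W.edges.getLast? = some lw := by
      rw [hWed, List.getLast?_append_of_ne_nil _ (List.cons_ne_nil _ _)]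
      cases hw2' : w₂.edges with
      | nil => exact absurd hw2' hw2ne
      | cons c l => rw [List.getLast?_cons_cons, ← hw2']; exact hlw
    obtain ⟨g₁, y₁, hg₁, hg₁t⟩ := Walk.exists_head_traverses q₁ hq1ne
    have hg₁s : s ∈ G.inc g₁ := by rw [hg₁t.inc]; exact Sym2.mem_mk_left _ _
    have hqhead : q.walk.edges.head? = some g₁ := by
      rw [hqed, List.head?_append_of_ne_nil _ hq1ne]; exact hg₁
    have hpwne : pw.edges ≠ [] := Walk.edges_ne_nil_of_ne pw hst
    have hpwhead : pw.edges.head? = some g₁ := by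
      obtain ⟨f₀, b₀, hf₀head, hf₀t⟩ := Walk.exists_head_traverses pw hpwne
      have hf₀s : s ∈ G.inc f₀ := by rw [hf₀t.inc]; exact Sym2.mem_mk_left _ _
      rcases hpw_sub f₀ hf₀t.mem_edges with hm | hm
      · have := (Walk.head?_edges_eq_some_iff hqnd1 f₀).mpr ⟨hm, hf₀s⟩
        rw [this] at hg₁
        rw [hf₀head, Option.some_inj.mp hg₁]
      · exact absurd (Walk.mem_support_of_mem_edges hm hf₀s) hs_notin_w2
    have hpwlast : pw.edges.getLast? = some lw := by
      obtain ⟨g, a₃, hg, hgt⟩ := Walk.exists_last_traverses pw hpwne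
      have hgtinc : t ∈ G.inc g := by rw [hgt.inc]; exact Sym2.mem_mk_right _ _
      rcases hpw_sub g hgt.mem_edges with hm | hm
      · exact absurd (Walk.mem_support_of_mem_edges hm hgtinc) ht_notin_q1
      · have := (Walk.getLast?_edges_eq_some_iff hnd2 g).mpr ⟨hm, hgtinc⟩
        rw [this] at hlw
        rw [hg, Option.some_inj.mp hlw.symm]
    have hg₁pw : g₁ ∈ pw.edges := by
      cases hpw' : pw.edges with
      | nil => exact absurd hpw' hpwne
      | cons c l =>
        rw [hpw', List.head?_cons, Option.some_inj] at hpwhead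
        rw [← hpwhead]; exact List.mem_cons_self
    have hlwpw : lw ∈ pw.edges := by
      obtain ⟨hh, hx⟩ := List.mem_getLast?_eq_getLast hpwlast
      rw [hx]; exact List.getLast_mem hh
    have hg₁q : g₁ ∈ q.walk.edges := by
      rw [hqed]; exact List.mem_append_left _ hg₁t.mem_edges
    have hl₂q : l₂ ∈ q.walk.edges := by
      rw [hqed]; exact List.mem_append_right _ (List.mem_cons_of_mem _ hl₂t.mem_edges)
    -- assemble the final equivalences
    refine ⟨Q, hQdisj, ?_, ?_⟩
    · intro f
      rw [hQs f]
      constructor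
      · rintro (hh | ⟨hfi, p', hp', hfp'⟩)
        · rw [hW'head, Option.some_inj] at hh
          subst hh
          exact Or.inl hWhead
        · rcases Set.mem_insert_iff.mp hp' with rfl | hp'
          · have hfg : f = g₁ := by
              have := (Walk.head?_edges_eq_some_iff hpwnd f).mpr ⟨hfp', hfi⟩
              rw [hpwhead, Option.some_inj] at this
              exact this.symm ▸ rfl
            subst hfg
            exact Or.inr ⟨hfi, q, hqP, hg₁q⟩
          · exact Or.inr ⟨hfi, p', hp'.1, hfp'⟩
      · rintro (hh | ⟨hfi, p, hp, hfp⟩)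
        · rw [hWhead, Option.some_inj] at hh
          subst hh
          rw [hW'head]
          exact Or.inl rfl
        · by_cases hpq' : p = q
          · subst hpq'
            have hfg : f = g₁ := by
              have := (Walk.head?_edges_eq_some_iff p.support_nodup f).mpr ⟨hfp, hfi⟩
              rw [hqhead, Option.some_inj] at this
              exact this.symm ▸ rfl
            subst hfg
            exact Or.inr ⟨hfi, pq, Set.mem_insert _ _, hg₁pw⟩
          · exact Or.inr ⟨hfi, p, Set.mem_insert_of_mem _ ⟨hp, hpq'⟩, hfp⟩
    · intro f
      rw [hQt f]
      constructor
      · rintro (hh | ⟨hfi, p', hp', hfp'⟩)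
        · rw [hW'last, Option.some_inj] at hh
          subst hh
          exact Or.inr ⟨hl₂tinc, q, hqP, hl₂q⟩
        · rcases Set.mem_insert_iff.mp hp' with rfl | hp'
          · have hfg : f = lw := by
              have := (Walk.getLast?_edges_eq_some_iff hpwnd f).mpr ⟨hfp', hfi⟩
              rw [hpwlast, Option.some_inj] at this
              exact this.symm ▸ rfl
            subst hfg
            exact Or.inl hWlast
          · exact Or.inr ⟨hfi, p', hp'.1, hfp'⟩
      · rintro (hh | ⟨hfi, p, hp, hfp⟩)
        · rw [hWlast, Option.some_inj] at hh
          subst hh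
          exact Or.inr ⟨hlwtinc, pq, Set.mem_insert _ _, hlwpw⟩
        · by_cases hpq' : p = q
          · subst hpq'
            have hfg : f = l₂ := by
              have := (Walk.getLast?_edges_eq_some_iff p.support_nodup f).mpr ⟨hfp, hfi⟩
              rw [hqlast, Option.some_inj] at this
              exact this.symm ▸ rfl
            subst hfg
            rw [hW'last]
            exact Or.inl rfl
          · exact Or.inr ⟨hfi, p, Set.mem_insert_of_mem _ ⟨hp, hpq'⟩, hfp⟩

end Multigraph
/-- **Augmenting path lemma.** For a system `P` of pairwise edge-disjoint
`st`-paths, either some `st`-cut is orthogonal to `P`, or there is a system `Q`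
of pairwise edge-disjoint `st`-paths with `δ_Q(s) ⊋ δ_P(s)` and
`δ_Q(t) ⊋ δ_P(t)`, each with exactly one new edge. -/
theorem augmenting_path {V : Type u} {E : Type v} (G : Multigraph V E)
    (s t : V) (hst : s ≠ t) (P : Set (G.STPath s t))
    (hP : G.STPathDisjoint P) :
    (∃ C : Set E, (∃ X : Set V, s ∈ X ∧ t ∉ X ∧ C = G.cut X) ∧
      (∀ p ∈ P, ∃! e, e ∈ C ∧ e ∈ p.walk.edges) ∧
      (∀ e ∈ C, ∃ p ∈ P, e ∈ p.walk.edges)) ∨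
    (∃ Q : Set (G.STPath s t), G.STPathDisjoint Q ∧
      (∃ e ∈ G.inci s, (∀ p ∈ P, e ∉ p.walk.edges) ∧
        {f | f ∈ G.inci s ∧ ∃ q ∈ Q, f ∈ q.walk.edges} =
          insert e {f | f ∈ G.inci s ∧ ∃ p ∈ P, f ∈ p.walk.edges}) ∧
      (∃ e ∈ G.inci t, (∀ p ∈ P, e ∉ p.walk.edges) ∧
        {f | f ∈ G.inci t ∧ ∃ q ∈ Q, f ∈ q.walk.edges} =
          insert e {f | f ∈ G.inci t ∧ ∃ p ∈ P, f ∈ p.walk.edges})) := by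
  classical
  set Rst : E → V → V → Prop := fun e a b =>
    G.inc e = s(a, b) ∧ ((∀ p ∈ P, e ∉ p.walk.edges) ∨ ∃ p ∈ P, p.walk.Traverses e b a)
    with hRst
  set R : V → V → Prop := fun a b => ∃ e, Rst e a b with hR
  set X : Set V := {v | Relation.ReflTransGen R s v} with hX
  have hsX : s ∈ X := Relation.ReflTransGen.refl
  by_cases htX : t ∈ X
  · -- augmenting case
    right
    have build : ∀ v, Relation.ReflTransGen R s v →
        ∃ w : G.Walk s v, ∀ e a b, w.Traverses e a b → Rst e a b := by
      intro v h
      induction h with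
      | refl => exact ⟨Multigraph.Walk.nil s, fun e a b ht => absurd ht (Multigraph.Walk.traverses_nil e a b)⟩
      | @tail b' c' _ hstep ih =>
        obtain ⟨w, hw⟩ := ih
        obtain ⟨e, he⟩ := hstep
        refine ⟨w.append (Multigraph.Walk.cons e he.1 (Multigraph.Walk.nil c')), ?_⟩
        intro f a b ht
        rw [Multigraph.Walk.traverses_append] at ht
        rcases ht with ht | ht
        · exact hw f a b ht
        · rcases ht with ⟨rfl, rfl, rfl⟩ | ht
          · exact he
          · exact absurd ht (Multigraph.Walk.traverses_nil _ _ _)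
    obtain ⟨w0, hw0⟩ := build t htX
    obtain ⟨W, hWnd, hWsteps⟩ := Multigraph.Walk.exists_simple w0
    have hres : ∀ e a b, W.Traverses e a b →
        (∀ p ∈ P, e ∉ p.walk.edges) ∨ ∃ p ∈ P, p.walk.Traverses e b a :=
      fun e a b h => (hw0 e a b (hWsteps e a b h)).2
    obtain ⟨Q, hQdisj, hQs, hQt⟩ := Multigraph.aug hst
      (W.edges.countP (fun e => decide (∃ p ∈ P, e ∈ p.walk.edges))) P hP W hWnd hres le_rfl
    have hWne : W.edges ≠ [] := Multigraph.Walk.edges_ne_nil_of_ne W hst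
    obtain ⟨es, bs, hesh, hest⟩ := Multigraph.Walk.exists_head_traverses W hWne
    obtain ⟨et, at', hetl, hett⟩ := Multigraph.Walk.exists_last_traverses W hWne
    have hesi : es ∈ G.inci s := by
      rw [Multigraph.mem_inci, hest.inc]; exact Sym2.mem_mk_left _ _
    have heti : et ∈ G.inci t := by
      rw [Multigraph.mem_inci, hett.inc]; exact Sym2.mem_mk_right _ _
    have hesfree : ∀ p ∈ P, es ∉ p.walk.edges := by
      rcases (hw0 es s bs (hWsteps es s bs hest)).2 with hfree | ⟨p, hp, hpt⟩
      · exact hfree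
      · exact absurd rfl (Multigraph.Walk.target_ne_start p.support_nodup hpt)
    have hetfree : ∀ p ∈ P, et ∉ p.walk.edges := by
      rcases (hw0 et at' t (hWsteps et at' t hett)).2 with hfree | ⟨p, hp, hpt⟩
      · exact hfree
      · exact absurd rfl (Multigraph.Walk.source_ne_end p.support_nodup hpt)
    refine ⟨Q, hQdisj, ⟨es, hesi, hesfree, ?_⟩, ⟨et, heti, hetfree, ?_⟩⟩
    · ext f
      rw [Set.mem_insert_iff]
      have := hQs f
      simp only [Set.mem_setOf_eq]
      rw [this, hesh]
      constructor
      · rintro (hh | hh)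
        · exact Or.inl (Option.some_inj.mp hh).symm
        · exact Or.inr hh
      · rintro (rfl | hh)
        · exact Or.inl rfl
        · exact Or.inr hh
    · ext f
      rw [Set.mem_insert_iff]
      have := hQt f
      simp only [Set.mem_setOf_eq]
      rw [this, hetl]
      constructor
      · rintro (hh | hh)
        · exact Or.inl (Option.some_inj.mp hh).symm
        · exact Or.inr hh
      · rintro (rfl | hh)
        · exact Or.inl rfl
        · exact Or.inr hh
  · -- cut case
    left
    have cutkey : ∀ e x y, G.inc e = s(x, y) → x ∈ X → y ∉ X →
        ∃ p ∈ P, p.walk.Traverses e x y := by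
      intro e x y hxy hx hy
      by_cases hfree : ∀ p ∈ P, e ∉ p.walk.edges
      · exact absurd (hx.tail ⟨e, hxy, Or.inl hfree⟩) hy
      · push_neg at hfree
        obtain ⟨p, hp, hep⟩ := hfree
        obtain ⟨a', b', ht⟩ := Multigraph.Walk.exists_traverses_of_mem_edges hep
        have hinc := ht.inc
        rw [hxy, Sym2.eq_iff] at hinc
        rcases hinc with ⟨h1, h2⟩ | ⟨h1, h2⟩
        · exact ⟨p, hp, h1 ▸ h2 ▸ ht⟩
        · exfalso
          refine hy (hx.tail ⟨e, hxy, Or.inr ⟨p, hp, ?_⟩⟩)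
          exact h1 ▸ h2 ▸ ht
    have noreentry : ∀ p ∈ P, ∀ e a b, p.walk.Traverses e a b → b ∈ X → a ∈ X := by
      intro p hp e a b ht hb
      by_contra ha
      obtain ⟨r, hr, hrt⟩ := cutkey e b a (by rw [ht.inc]; exact Sym2.eq_swap) hb ha
      by_cases hpr : p = r
      · subst hpr
        have := Multigraph.Walk.traverses_eq_of_nodup
          (Multigraph.Walk.edges_nodup_of_support_nodup p.support_nodup) ht hrt
        exact ha (this.1 ▸ hb)
      · exact hP p hp r hr hpr e ht.mem_edges hrt.mem_edges
    refine ⟨G.cut X, ⟨X, hsX, htX, rfl⟩, ?_, ?_⟩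
    · intro p hp
      exact Multigraph.Walk.existsUnique_cut_edge p.walk X
        (Multigraph.Walk.edges_nodup_of_support_nodup p.support_nodup) hsX htX
        (noreentry p hp)
    · rintro e ⟨x, y, hxy, hx, hy⟩
      obtain ⟨p, hp, ht⟩ := cutkey e x y hxy hx hy
      exact ⟨p, hp, ht.mem_edges⟩
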